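/- Let λ(p) be a formal Laurent series λ = p + u₀ + u₁p⁻¹ + u₂p⁻² + … and v a scalar. Then for each n ≥ 1, (1/n)·( p ∂_p(λⁿ)/(p − v) )₊ = ( p ∂_p B_n − v_{(n)} )/(p − v), where B_n = (1/n)(λⁿ)₊, v_{(n)} = (p ∂_p B_n)|_{p=v}, ( )₊ denotes the projection onto nonnegative powers of p, and 1/(p−v) is expanded as a series in p⁻¹. -/

import Mathlib

/- We model formal Laurent series in p⁻¹ (finitely many positive powers of p) as
Mathlib's `LaurentSeries K` in the variable q = p⁻¹: the coefficient of pᵏ is the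
coefficient at the exponent −k.  Thus p = single (−1) 1, the projection ( )₊ keeps
exponents ≤ 0, the operator p∂_p multiplies the coefficient at exponent k by −k, and
1/(p−v) is the inverse of single (−1) 1 − single 0 v in the field of Laurent series,
which is exactly the expansion Σ_{m≥0} vᵐ p^{−m−1}. -/

/-- for λ = p + u₀ + u₁p⁻¹ + …, n ≥ 1, B_n = (1/n)(λⁿ)₊ and
v_{(n)} = (p∂_pB_n)|_{p=v}, one has
(1/n)·( p∂_p(λⁿ)/(p−v) )₊ = ( p∂_pB_n − v_{(n)} )/(p−v). -/
theorem stmt9 (K : Type) [Field K] [CharZero K] (v : K) (n : ℕ) (hn : 1 ≤ n)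
    (lam Bn Dn Dln Qplus : LaurentSeries K)
    -- λ = p + u₀ + u₁ p⁻¹ + … : leading coefficient 1 at p¹, no higher powers
    (hlead : lam.coeff (-1) = 1)
    (htop : ∀ k : ℤ, k < -1 → lam.coeff k = 0)
    -- B_n = (1/n)(λⁿ)₊
    (hBn : ∀ k : ℤ, Bn.coeff k = if k ≤ 0 then (n : K)⁻¹ * (lam ^ n).coeff k else 0)
    -- Dn = p ∂_p B_n
    (hDn : ∀ k : ℤ, Dn.coeff k = ((-k : ℤ) : K) * Bn.coeff k)
    -- Dln = p ∂_p (λⁿ)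
    (hDln : ∀ k : ℤ, Dln.coeff k = ((-k : ℤ) : K) * (lam ^ n).coeff k)
    -- Qplus = ( (1/n)·p∂_p(λⁿ)/(p−v) )₊
    (hQplus : ∀ k : ℤ, Qplus.coeff k =
      if k ≤ 0 then
        ((n : K)⁻¹ •
          (Dln / (HahnSeries.single (-1 : ℤ) (1 : K) - HahnSeries.single (0 : ℤ) v))).coeff k
      else 0) :
    Qplus =
      (Dn - HahnSeries.single (0 : ℤ)
          (∑ m ∈ Finset.range (n + 1), Dn.coeff (-(m : ℤ)) * v ^ m)) /
        (HahnSeries.single (-1 : ℤ) (1 : K) - HahnSeries.single (0 : ℤ) v) := by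
  classical
  set P : LaurentSeries K :=
    HahnSeries.single (-1 : ℤ) (1 : K) - HahnSeries.single (0 : ℤ) v with hPdef
  have hPcoeff : P.coeff (-1) = 1 := by
    simp [hPdef, HahnSeries.coeff_sub, HahnSeries.coeff_single]
  have hP : P ≠ 0 := fun h => by simp [h] at hPcoeff
  set W : LaurentSeries K := (n : K)⁻¹ • (Dln / P) with hWdef
  have hWP : (Dln / P) * P = Dln := div_mul_cancel₀ _ hP
  have hWc : ∀ k : ℤ, W.coeff k = (n : K)⁻¹ * (Dln / P).coeff k := by
    intro k
    rw [hWdef, HahnSeries.coeff_smul, smul_eq_mul]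
  -- generic coefficient formula for multiplication by P
  have hmulP : ∀ (X : LaurentSeries K) (k : ℤ),
      (X * P).coeff k = X.coeff (k + 1) - v * X.coeff k := by
    intro X k
    have h1 : (X * HahnSeries.single (-1 : ℤ) (1 : K)).coeff k = X.coeff (k + 1) := by
      simpa using HahnSeries.coeff_mul_single_add (r := (1 : K)) (x := X)
        (a := k + 1) (b := (-1 : ℤ))
    have h2 : (X * HahnSeries.single (0 : ℤ) v).coeff k = X.coeff k * v := by
      simpa using HahnSeries.coeff_mul_single_add (r := v) (x := X) (a := k) (b := (0 : ℤ))
    rw [hPdef, mul_sub, HahnSeries.coeff_sub, h1, h2, mul_comm v]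
  -- recursion for W
  have hrec : ∀ k : ℤ, W.coeff (k + 1) - v * W.coeff k = (n : K)⁻¹ * Dln.coeff k := by
    intro k
    have h := congrArg (fun X : LaurentSeries K => X.coeff k) hWP
    simp only [hmulP (Dln / P) k] at h
    rw [hWc, hWc]
    rw [← h]
    ring
  -- lam is nonzero with order -1
  have hlamne : lam ≠ 0 := by
    intro h
    rw [h] at hlead
    simp at hlead
  have horder : lam.order = -1 := by
    have h1 : lam.order ≤ -1 := HahnSeries.order_le_of_coeff_ne_zero (by
      rw [hlead]; exact one_ne_zero)
    have h2 : ¬ lam.order < -1 := fun h =>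
      hlamne (HahnSeries.coeff_order_eq_zero.mp (htop _ h))
    omega
  have hpow : (lam ^ n).order = -(n : ℤ) := by
    rw [HahnSeries.order_pow, horder]
    simp
  have hDlnlow : ∀ k : ℤ, k < -(n : ℤ) → Dln.coeff k = 0 := by
    intro k hk
    rw [hDln, HahnSeries.coeff_eq_zero_of_lt_order (by rw [hpow]; exact hk), mul_zero]
  -- W vanishes at low exponents
  have hlow : ∀ k : ℤ, k ≤ -(n : ℤ) → W.coeff k = 0 := by
    by_contra h
    push_neg at h
    obtain ⟨k, hk, hk0⟩ := h
    have hWF : (W.support ∩ Set.Iic (-(n : ℤ))).IsWF :=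
      W.isWF_support.mono Set.inter_subset_left
    have hS : (W.support ∩ Set.Iic (-(n : ℤ))).Nonempty := ⟨k, hk0, hk⟩
    set k0 := hWF.min hS with hk0def
    obtain ⟨hsup, hle⟩ := hWF.min_mem hS
    have h1 : W.coeff (k0 - 1) = 0 := by
      by_contra hne
      have hmem : k0 - 1 ∈ W.support ∩ Set.Iic (-(n : ℤ)) :=
        ⟨hne, by simp only [Set.mem_Iic] at hle ⊢; omega⟩
      exact hWF.not_lt_min hS hmem (by omega)
    have h2 : Dln.coeff (k0 - 1) = 0 := hDlnlow _ (by
      simp only [Set.mem_Iic] at hle; omega)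
    have h3 := hrec (k0 - 1)
    rw [h1, h2, show k0 - 1 + 1 = k0 from by omega] at h3
    simp only [mul_zero, sub_zero] at h3
    exact hsup h3
  -- relation between Dn and Dln at nonpositive exponents
  have hDnD : ∀ k : ℤ, k ≤ 0 → Dn.coeff k = (n : K)⁻¹ * Dln.coeff k := by
    intro k hk
    rw [hDn, hBn, if_pos hk, hDln]
    ring
  have hDn0 : Dn.coeff 0 = 0 := by rw [hDn]; simp
  -- explicit formula for W at exponents above -n
  have hform : ∀ j : ℕ, W.coeff (-(n : ℤ) + 1 + j) =
      ∑ i ∈ Finset.range (j + 1), v ^ i * ((n : K)⁻¹ * Dln.coeff (-(n : ℤ) + j - i)) := by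
    intro j
    induction j with
    | zero =>
        have h := hrec (-(n : ℤ))
        rw [hlow _ le_rfl, mul_zero, sub_zero] at h
        simpa using h
    | succ j ih =>
        have h := hrec (-(n : ℤ) + 1 + j)
        rw [ih] at h
        have hsum : ∑ i ∈ Finset.range (j + 1 + 1),
              v ^ i * ((n : K)⁻¹ * Dln.coeff (-(n : ℤ) + ((j : ℤ) + 1) - (i : ℤ))) =
            v * ∑ i ∈ Finset.range (j + 1),
              v ^ i * ((n : K)⁻¹ * Dln.coeff (-(n : ℤ) + j - i))
            + (n : K)⁻¹ * Dln.coeff (-(n : ℤ) + 1 + j) := by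
          rw [Finset.sum_range_succ', Finset.mul_sum]
          congr 1
          · apply Finset.sum_congr rfl
            intro i _
            rw [show (-(n : ℤ) + ((j : ℤ) + 1) - ((i + 1 : ℕ) : ℤ)) = -(n : ℤ) + j - i from by
              push_cast; ring]
            push_cast
            ring
          · rw [show (-(n : ℤ) + ((j : ℤ) + 1) - ((0 : ℕ) : ℤ)) = -(n : ℤ) + 1 + j from by
              push_cast; ring]
            norm_num
        simp only [Nat.cast_add, Nat.cast_one]
        rw [show (-(n : ℤ) + 1 + ((j : ℤ) + 1)) = (-(n : ℤ) + 1 + j) + 1 from by ring, hsum]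
        linear_combination h
  -- the evaluation identity at k = 0
  have h0 : v * W.coeff 0 =
      ∑ m ∈ Finset.range (n + 1), Dn.coeff (-(m : ℤ)) * v ^ m := by
    have hj : (-(n : ℤ) + 1 + ((n - 1 : ℕ) : ℤ)) = 0 := by
      have : ((n - 1 : ℕ) : ℤ) = (n : ℤ) - 1 := by omega
      rw [this]; ring
    have h := hform (n - 1)
    rw [hj] at h
    have hrange : n - 1 + 1 = n := by omega
    rw [hrange] at h
    rw [h, Finset.mul_sum]
    rw [Finset.sum_range_succ' (fun m => Dn.coeff (-(m : ℤ)) * v ^ m)]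
    simp only [Nat.cast_zero, neg_zero, pow_zero, mul_one, hDn0, add_zero]
    apply Finset.sum_congr rfl
    intro i _
    have harg : -(n : ℤ) + ((n - 1 : ℕ) : ℤ) - i = -((i : ℤ) + 1) := by omega
    rw [harg]
    have hD := hDnD (-((i : ℤ) + 1)) (by omega)
    push_cast
    rw [hD]
    ring
  -- final assembly
  rw [eq_div_iff hP]
  apply HahnSeries.coeff_injective
  funext k
  rw [hmulP Qplus k]
  rw [HahnSeries.coeff_sub, HahnSeries.coeff_single]
  rcases lt_trichotomy k 0 with hk | hk | hk
  · -- k ≤ -1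
    rw [hQplus, hQplus, if_pos (by omega : k + 1 ≤ 0), if_pos (by omega : k ≤ 0)]
    rw [if_neg (by omega : ¬ k = 0), sub_zero]
    rw [hrec k, hDnD k (by omega)]
  · -- k = 0
    subst hk
    rw [hQplus, hQplus, if_neg (by omega : ¬ (0 : ℤ) + 1 ≤ 0), if_pos le_rfl, if_pos rfl]
    rw [h0, hDn0]
  · -- k ≥ 1
    rw [hQplus, hQplus, if_neg (by omega : ¬ k + 1 ≤ 0), if_neg (by omega : ¬ k ≤ 0)]
    rw [if_neg (by omega : ¬ k = 0), sub_zero, mul_zero, sub_zero]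
    rw [hDn, hBn, if_neg (by omega : ¬ k ≤ 0), mul_zero]
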